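/- Let Λ be a linear map on n×n complex matrices whose Choi matrix is positive semidefinite, and suppose Λ is block-diagonal with off-diagonal damping factors α_{ij} and transition probabilities p(i→j). Then for all i ≠ j, |α_{ij}|² ≤ p(i→i) · p(j→j); i.e., the coherences must be damped at least by the factor √(p(i→i) p(j→j)). -/

import Mathlib

open Matrix ComplexOrder

/-- If a linear map `Λ` on `n×n` complex matrices has a positive semidefinite Choi matrix
and is block-diagonal with damping factors `α_{ij}` and transition probabilities
`p(i→j) = (Λ(E_{ii}))_{jj}`, then for all `i ≠ j` the coherences are damped at least by
`√(p(i→i) p(j→j))`:  `|α_{ij}|² ≤ p(i→i) · p(j→j)`. -/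
theorem damping_factor_bound (n : ℕ)
    (Λ : Matrix (Fin n) (Fin n) ℂ →ₗ[ℂ] Matrix (Fin n) (Fin n) ℂ)
    (hChoi : Matrix.PosSemidef (Matrix.of fun p q : Fin n × Fin n =>
      Λ (Matrix.single p.1 q.1 1) p.2 q.2))
    (α : Fin n → Fin n → ℂ)
    (hα : ∀ i j : Fin n, i ≠ j →
      Λ (Matrix.single i j 1) = α i j • Matrix.single i j 1)
    (hdiag : ∀ i : Fin n, (Λ (Matrix.single i i 1)).IsDiag) :
    ∀ i j : Fin n, i ≠ j →
      ‖α i j‖ ^ 2 ≤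
        (Λ (Matrix.single i i 1) i i).re * (Λ (Matrix.single j j 1) j j).re := by
  intro i j hij
  set J : Matrix (Fin n × Fin n) (Fin n × Fin n) ℂ :=
    Matrix.of fun p q : Fin n × Fin n =>
      Λ (Matrix.single p.1 q.1 1) p.2 q.2 with hJ
  set P : ℝ := (Λ (Matrix.single i i 1) i i).re with hPdef
  set Q : ℝ := (Λ (Matrix.single j j 1) j j).re with hQdef
  set a : ℝ := ‖α i j‖ with hadef
  -- entry identities
  have hA : Λ (Matrix.single i j 1) i j = α i j := by
    rw [hα i j hij]; simp
  have hA' : Λ (Matrix.single j i 1) j i = α j i := by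
    rw [hα j i hij.symm]; simp
  have hconj : α j i = (starRingEnd ℂ) (α i j) := by
    have h := hChoi.1.apply ((i,i) : Fin n × Fin n) ((j,j) : Fin n × Fin n)
    simp only [hJ, Matrix.of_apply] at h
    rw [hA, hA'] at h
    rw [← h]; simp
  have hPe : ((P : ℝ) : ℂ) = Λ (Matrix.single i i 1) i i := by
    have h := hChoi.1.apply ((i,i) : Fin n × Fin n) ((i,i) : Fin n × Fin n)
    simp only [hJ, Matrix.of_apply] at h
    exact Complex.conj_eq_iff_re.mp h
  have hQe : ((Q : ℝ) : ℂ) = Λ (Matrix.single j j 1) j j := by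
    have h := hChoi.1.apply ((j,j) : Fin n × Fin n) ((j,j) : Fin n × Fin n)
    simp only [hJ, Matrix.of_apply] at h
    exact Complex.conj_eq_iff_re.mp h
  have hM := hChoi.submatrix (![(i,i),(j,j)] : Fin 2 → Fin n × Fin n)
  have hP0 : 0 ≤ P := by
    have h := hM.dotProduct_mulVec_nonneg ![1, 0]
    simp only [dotProduct, Matrix.mulVec, Fin.sum_univ_two, Matrix.submatrix_apply,
      Matrix.cons_val_zero, Matrix.cons_val_one, Matrix.head_cons, Pi.star_apply, star_one,
      star_zero, mul_zero, mul_one, zero_mul, add_zero, zero_add, one_mul, hJ,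
      Matrix.of_apply] at h
    rw [← hPe] at h
    exact_mod_cast h
  have hQ0 : 0 ≤ Q := by
    have h := hM.dotProduct_mulVec_nonneg ![0, 1]
    simp only [dotProduct, Matrix.mulVec, Fin.sum_univ_two, Matrix.submatrix_apply,
      Matrix.cons_val_zero, Matrix.cons_val_one, Matrix.head_cons, Pi.star_apply, star_one,
      star_zero, mul_zero, mul_one, zero_mul, add_zero, zero_add, one_mul, hJ,
      Matrix.of_apply] at h
    rw [← hQe] at h
    exact_mod_cast h
  have key : ∀ t : ℝ, 0 ≤ Q * (t * t) + (-(2 * a ^ 2)) * t + a ^ 2 * P := by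
    intro t
    have h := hM.dotProduct_mulVec_nonneg ![α i j, (-t : ℂ)]
    have h2 : (star ![α i j, (-t : ℂ)]) ⬝ᵥ
        (J.submatrix ![(i,i),(j,j)] ![(i,i),(j,j)]) *ᵥ ![α i j, (-t : ℂ)]
        = ((Q * (t * t) + (-(2 * a ^ 2)) * t + a ^ 2 * P : ℝ) : ℂ) := by
      simp only [dotProduct, Matrix.mulVec, Fin.sum_univ_two, Matrix.submatrix_apply,
        Matrix.cons_val_zero, Matrix.cons_val_one, Matrix.head_cons, Pi.star_apply, hJ,
        Matrix.of_apply]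
      rw [hA, hA', hconj]
      push_cast
      rw [← hPe, ← hQe]
      have habs : ((a : ℝ) : ℂ) ^ 2 = α i j * (starRingEnd ℂ) (α i j) := by
        rw [hadef]
        push_cast
        rw [Complex.mul_conj, ← Complex.sq_norm]
        push_cast
        ring
      rw [habs]
      simp only [star_neg, Complex.star_def, Complex.conj_ofReal]
      ring
    rw [h2] at h
    exact_mod_cast h
  have hd := discrim_le_zero key
  rw [discrim] at hd
  nlinarith [hd, mul_nonneg hP0 hQ0, sq_nonneg a, sq_nonneg (a^2)]
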